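/- Let n ≥ 1 be an integer and let β satisfy 3 − 2√2 < β < 3 + 2√2. Then the smooth sensitivity of the Gini impurity at support size n with minimum support 1 equals its local sensitivity: sup_{k ∈ ℕ} e^{−βk}·g(max(1, n − k)) = g(n). -/

import Mathlib

/-- Local sensitivity of the Gini impurity as a function of the support size. -/
noncomputable def g (x : ℝ) : ℝ := 1 - (x / (x + 1))^2 - (1 / (x + 1))^2

lemma g_eq {x : ℝ} (hx : x + 1 ≠ 0) : g x = 2 * x / (x + 1)^2 := by
  unfold g
  field_simp
  ring

lemma g_pos {x : ℝ} (hx : (1:ℝ) ≤ x) : 0 < g x := by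
  have h : x + 1 ≠ 0 := by nlinarith
  rw [g_eq h]
  apply div_pos <;> nlinarith

lemma g_hasDerivAt {x : ℝ} (hx : x + 1 ≠ 0) :
    HasDerivAt g (2 * (1 - x) / (x + 1)^3) x := by
  have h1 : HasDerivAt (fun t : ℝ => t + 1) 1 x := (hasDerivAt_id x).add_const 1
  have h2 : HasDerivAt (fun t : ℝ => t / (t + 1))
      ((1 * (x + 1) - x * 1) / (x + 1)^2) x := (hasDerivAt_id x).div h1 hx
  have h3 : HasDerivAt (fun t : ℝ => 1 / (t + 1))
      ((0 * (x + 1) - 1 * 1) / (x + 1)^2) x := (hasDerivAt_const x 1).div h1 hx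
  have h4 := ((h2.pow 2).const_sub 1).sub (h3.pow 2)
  refine h4.congr_deriv ?_
  norm_num
  field_simp
  ring

lemma F_mono : MonotoneOn (fun t : ℝ => Real.exp ((3 - 2 * Real.sqrt 2) * t) * g t)
    (Set.Ici (1:ℝ)) := by
  set c : ℝ := 3 - 2 * Real.sqrt 2 with hc
  have hs : Real.sqrt 2 ^ 2 = 2 := Real.sq_sqrt (by norm_num)
  have hs1 : (1:ℝ) ≤ Real.sqrt 2 := by nlinarith [Real.sqrt_nonneg 2]
  have hs2 : Real.sqrt 2 ≤ 3/2 := by nlinarith [Real.sqrt_nonneg 2]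
  have hderiv : ∀ x : ℝ, 1 ≤ x →
      HasDerivAt (fun t : ℝ => Real.exp (c * t) * g t)
        (Real.exp (c * x) * (c * g x + 2 * (1 - x) / (x + 1)^3)) x := by
    intro x hx
    have hx0 : x + 1 ≠ 0 := by nlinarith
    have he : HasDerivAt (fun t : ℝ => Real.exp (c * t)) (Real.exp (c * x) * c) x := by
      have := ((hasDerivAt_id x).const_mul c).exp
      simpa [mul_comm] using this
    have := he.mul (g_hasDerivAt hx0)
    refine this.congr_deriv ?_
    ring
  apply monotoneOn_of_deriv_nonneg (convex_Ici 1)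
  · intro x hx
    exact ((hderiv x hx).continuousAt).continuousWithinAt
  · intro x hx
    rw [interior_Ici] at hx
    exact (hderiv x (le_of_lt hx)).differentiableAt.differentiableWithinAt
  · intro x hx
    rw [interior_Ici] at hx
    have hx1 : (1:ℝ) ≤ x := le_of_lt hx
    have hx0 : x + 1 ≠ 0 := by nlinarith
    rw [(hderiv x hx1).deriv]
    have hgx : g x = 2 * x / (x + 1)^2 := g_eq hx0
    have hpos : (0:ℝ) < x + 1 := by nlinarith
    have key : 0 ≤ c * g x + 2 * (1 - x) / (x + 1)^3 := by
      rw [hgx]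
      have heq : c * (2 * x / (x + 1)^2) + 2 * (1 - x) / (x + 1)^3
          = (2 * (c * x * (x + 1) + (1 - x))) / (x + 1)^3 := by
        field_simp
      rw [heq]
      apply div_nonneg _ (by positivity)
      have hcpos : 0 < c := by rw [hc]; nlinarith
      nlinarith [sq_nonneg (2 * c * x + c - 1)]
    positivity

theorem smooth_sensitivity_eq_local_mid_beta (n : ℤ) (hn : 1 ≤ n) (β : ℝ)
    (hβ1 : 3 - 2 * Real.sqrt 2 < β) (hβ2 : β < 3 + 2 * Real.sqrt 2) :
    (⨆ k : ℕ, Real.exp (-β * (k : ℝ)) * g (max (1 : ℝ) ((n : ℝ) - (k : ℝ)))) = g (n : ℝ) := by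
  set c : ℝ := 3 - 2 * Real.sqrt 2 with hc
  have hs : Real.sqrt 2 ^ 2 = 2 := Real.sq_sqrt (by norm_num)
  have hcpos : 0 < c := by rw [hc]; nlinarith [Real.sqrt_nonneg 2]
  have hn1 : (1:ℝ) ≤ (n:ℝ) := by exact_mod_cast hn
  have bound : ∀ k : ℕ, Real.exp (-β * (k : ℝ)) * g (max (1:ℝ) ((n:ℝ) - k)) ≤ g n := by
    intro k
    set m : ℝ := max (1:ℝ) ((n:ℝ) - k) with hm
    have hm1 : (1:ℝ) ≤ m := le_max_left _ _
    have hmn : m ≤ (n:ℝ) := max_le hn1 (by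
      have : (0:ℝ) ≤ k := Nat.cast_nonneg k
      linarith)
    have hnk : (n:ℝ) - m ≤ k := by
      have : (n:ℝ) - k ≤ m := le_max_right _ _
      linarith
    have h1 : Real.exp (c * m) * g m ≤ Real.exp (c * n) * g n := F_mono (Set.mem_Ici.2 hm1) (Set.mem_Ici.2 hn1) hmn
    have hgm : g m ≤ Real.exp (c * k) * g n := by
      have h2 : g m ≤ Real.exp (c * ((n:ℝ) - m)) * g n := by
        have hem : 0 < Real.exp (c * m) := Real.exp_pos _
        rw [mul_sub, Real.exp_sub, div_mul_eq_mul_div, le_div_iff₀ hem]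
        calc g m * Real.exp (c * m) = Real.exp (c * m) * g m := by ring
        _ ≤ Real.exp (c * n) * g n := h1
      calc g m ≤ Real.exp (c * ((n:ℝ) - m)) * g n := h2
      _ ≤ Real.exp (c * k) * g n := by
          apply mul_le_mul_of_nonneg_right _ (le_of_lt (g_pos hn1))
          exact Real.exp_le_exp.2 (mul_le_mul_of_nonneg_left hnk (le_of_lt hcpos))
    calc Real.exp (-β * k) * g m ≤ Real.exp (-β * k) * (Real.exp (c * k) * g n) := by
          exact mul_le_mul_of_nonneg_left hgm (le_of_lt (Real.exp_pos _))
    _ = Real.exp ((c - β) * k) * g n := by rw [← mul_assoc, ← Real.exp_add]; ring_nf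
    _ ≤ 1 * g n := by
        apply mul_le_mul_of_nonneg_right _ (le_of_lt (g_pos hn1))
        rw [Real.exp_le_one_iff]
        have : c ≤ β := le_of_lt hβ1
        have hk : (0:ℝ) ≤ k := Nat.cast_nonneg k
        nlinarith
    _ = g n := one_mul _
  apply le_antisymm
  · exact ciSup_le bound
  · have hbdd : BddAbove (Set.range fun k : ℕ =>
        Real.exp (-β * (k : ℝ)) * g (max (1:ℝ) ((n:ℝ) - k))) :=
      ⟨g n, Set.forall_mem_range.2 bound⟩
    have h0 := le_ciSup hbdd 0
    simpa [max_eq_right hn1] using h0
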